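/- Let A be a non-singular by columns (NSC) s×h matrix over F_q with s ≤ h, and let C_1,…,C_s be linear codes in F_q^m, each a nonzero proper subspace of F_q^m. Let C = [C_1,…,C_s]·A. Then the minimum distance of the Euclidean dual of C satisfies d(C^{⊥E}) ≥ min{ s + 1, s·d(C_s^{⊥E}), (s−1)·d(C_{s−1}^{⊥E}), …, d(C_1^{⊥E}) }. -/

import Mathlib

/-- Minimum distance (minimum Hamming weight of a nonzero element) of a set of vectors. -/
noncomputable def dminS {F : Type*} [DecidableEq F] [Zero F] {n : Type*} [Fintype n]
    (C : Set (n → F)) : ℕ :=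
  sInf { w | ∃ c ∈ C, c ≠ 0 ∧ hammingNorm c = w }

/-- Euclidean dual of a set of vectors. -/
def dualE {F : Type*} [Field F] {n : Type*} [Fintype n] (C : Set (n → F)) : Set (n → F) :=
  { x | ∀ c ∈ C, ∑ j, x j * c j = 0 }

/-- Hermitian dual (with respect to x ↦ x^q) of a set of vectors over F_{q^2}. -/
def dualH {F : Type*} [Field F] {n : Type*} [Fintype n] (q : ℕ) (C : Set (n → F)) :
    Set (n → F) :=
  { x | ∀ c ∈ C, ∑ j, x j * (c j) ^ q = 0 }

/-- The matrix-product code `[C_1,…,C_s]·A` as a set of vectors indexed by `Fin h × Fin m`. -/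
def mpcSet {F : Type*} [Field F] {s h m : ℕ}
    (C : Fin s → Set (Fin m → F)) (A : Matrix (Fin s) (Fin h) F) :
    Set (Fin h × Fin m → F) :=
  { p | ∃ v : Fin s → Fin m → F, (∀ i, v i ∈ C i) ∧ ∀ x, p x = ∑ i, A i x.1 * v i x.2 }

/-- A matrix is non-singular by columns. -/
def IsNSC {F : Type*} [Field F] {s h : ℕ} (A : Matrix (Fin s) (Fin h) F) : Prop :=
  ∀ (i : ℕ) (hi : i ≤ s), 0 < i → ∀ c : Fin i → Fin h, StrictMono c →
    (Matrix.of fun r t : Fin i => A (Fin.castLE hi r) (c t)).det ≠ 0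

/-- Punctured code: projection of `C` onto the coordinates in `R`. -/
def punct {F : Type*} {n : Type*} (C : Set (n → F)) (R : Finset n) :
    Set ({x // x ∈ R} → F) :=
  (fun c (t : {x // x ∈ R}) => c t.1) '' C

/-- `R` is an (r,δ)-extended recovery set for coordinate `i` of the code `C`. -/
def IsRecSet {F : Type*} [DecidableEq F] [Zero F] {n : Type*} [Fintype n]
    (C : Set (n → F)) (r δ : ℕ) (i : n) (R : Finset n) : Prop :=
  i ∈ R ∧ R.card ≤ r + δ - 1 ∧ δ ≤ dminS (punct C R)

/-- `C` is a locally recoverable code with locality (r,δ). -/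
def IsLRC {F : Type*} [DecidableEq F] [Zero F] {n : Type*} [Fintype n]
    (C : Set (n → F)) (r δ : ℕ) : Prop :=
  ∀ i : n, ∃ R : Finset n, IsRecSet C r δ i R

/-- `wv α i` is the evaluation of the monomial `X^(i-1)` at all points of the field,
enumerated by `α`. -/
def wv {F : Type*} [Field F] {q : ℕ} (α : Fin q ≃ F) (i : ℕ) : Fin q → F :=
  fun j => (α j) ^ (i - 1)

/-- `av α p i` : the vectors `a_i`, with `a_i = w_i` for `i < q` and
`a_q = w_q + ((p-1)/2) • w_1`. -/
def av {F : Type*} [Field F] {q : ℕ} (α : Fin q ≃ F) (p : ℕ) (i : ℕ) : Fin q → F :=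
  if i = q then wv α q + (((p - 1) / 2 : ℕ) : F) • wv α 1 else wv α i

/-- The square matrix whose rows are `a_1, …, a_q`. -/
def Adot {F : Type*} [Field F] {q : ℕ} (α : Fin q ≃ F) (p : ℕ) : Matrix (Fin q) (Fin q) F :=
  Matrix.of fun r j => av α p ((r : ℕ) + 1) j

lemma exists_dual_vec {F : Type*} [Field F] {m : ℕ} (C : Submodule F (Fin m → F))
    (hC : C ≠ ⊤) :
    ∃ z : Fin m → F, z ≠ 0 ∧ z ∈ dualE (C : Set (Fin m → F)) := by
  obtain ⟨f, hf0, hfmap⟩ :=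
    C.exists_dual_map_eq_bot_of_lt_top (lt_top_iff_ne_top.mpr hC) inferInstance
  have key : ∀ w : Fin m → F, f w = ∑ l, f (Pi.single l 1) * w l := by
    intro w
    have hw : w = ∑ l, Pi.single l (w l) := (Finset.univ_sum_single w).symm
    calc f w = f (∑ l, Pi.single l (w l)) := by rw [← hw]
      _ = ∑ l, f (Pi.single l (w l)) := map_sum f _ _
      _ = ∑ l, f (Pi.single l 1) * w l := by
          refine Finset.sum_congr rfl fun l _ => ?_
          have h1 : (Pi.single l (w l) : Fin m → F) = w l • (Pi.single l (1 : F) : Fin m → F) := by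
            ext j
            simp [Pi.single_apply, smul_eq_mul, mul_ite]
          rw [h1, map_smul, smul_eq_mul, mul_comm]
  refine ⟨fun l => f (Pi.single l 1), ?_, ?_⟩
  · intro h0
    have hz : ∀ l, f (Pi.single l (1 : F)) = 0 := fun l => by simpa using congrFun h0 l
    refine hf0 (LinearMap.ext fun w => ?_)
    rw [key w]
    simp [hz]
  · intro c hc
    have hfc : f c = 0 := by
      have : f c ∈ C.map f := ⟨c, hc, rfl⟩
      rwa [hfmap, Submodule.mem_bot] at this
    show ∑ l, f (Pi.single l 1) * c l = 0
    rw [← key c]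
    exact hfc

lemma hn_col {F : Type*} [DecidableEq F] [Zero F] {h m : ℕ} (x : Fin h × Fin m → F) :
    hammingNorm x = ∑ l : Fin m, hammingNorm (fun k => x (k, l)) := by
  simp only [hammingNorm, Finset.card_filter]
  rw [Fintype.sum_prod_type, Finset.sum_comm]

lemma nsc_kernel {F : Type*} [Field F] [DecidableEq F] {s h : ℕ}
    {A : Matrix (Fin s) (Fin h) F} (hA : IsNSC A) {u : Fin h → F} {r : ℕ} (hr : r ≤ s)
    (hwt : hammingNorm u ≤ r)
    (hker : ∀ i : Fin s, (i : ℕ) < r → ∑ k, A i k * u k = 0) : u = 0 := by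
  classical
  set K : Finset (Fin h) := Finset.univ.filter (fun k => u k ≠ 0) with hK
  have hKcard : K.card = hammingNorm u := rfl
  by_cases ht0 : K.card = 0
  · funext k
    simp only [Pi.zero_apply]
    by_contra hk
    have : k ∈ K := by simp [hK, hk]
    simp [Finset.card_eq_zero.mp ht0] at this
  · set t := K.card with htdef
    have htpos : 0 < t := Nat.pos_of_ne_zero ht0
    have hts : t ≤ s := le_trans (hKcard ▸ hwt) hr
    set c : Fin t ↪o Fin h := K.orderEmbOfFin rfl with hc
    have hdet := hA t hts htpos c c.strictMono
    have hKmap : K = Finset.univ.map c.toEmbedding := by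
      apply Finset.eq_of_subset_of_card_le
      · intro k hk
        have : k ∈ Set.range c := by
          rw [Finset.range_orderEmbOfFin]; exact hk
        obtain ⟨i, hi⟩ := this
        exact Finset.mem_map.mpr ⟨i, Finset.mem_univ i, hi⟩
      · simp
        exact htdef.le
    have hmv : (Matrix.of fun r' t' : Fin t => A (Fin.castLE hts r') (c t')).mulVec
        (fun i => u (c i)) = 0 := by
      funext i
      have hsum : ∑ t', A (Fin.castLE hts i) (c t') * u (c t')
          = ∑ k, A (Fin.castLE hts i) k * u k := by
        rw [← Finset.sum_subset (Finset.subset_univ K)]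
        · rw [hKmap, Finset.sum_map]; rfl
        · intro k _ hk
          have : u k = 0 := by
            by_contra hne; exact hk (by simp [hK, hne])
          simp [this]
      have := hker (Fin.castLE hts i) (lt_of_lt_of_le i.2 (hKcard ▸ hwt))
      simpa [Matrix.mulVec, dotProduct, hsum] using this
    have hvec := Matrix.eq_zero_of_mulVec_eq_zero hdet hmv
    funext k
    simp only [Pi.zero_apply]
    by_contra hk
    have hkK : k ∈ K := by simp [hK, hk]
    have : k ∈ Set.range c := by rw [Finset.range_orderEmbOfFin]; exact hkK
    obtain ⟨i, hi⟩ := this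
    exact hk (by rw [← hi]; exact congrFun hvec i)

lemma y_mem {F : Type*} [Field F] {s h m : ℕ} (A : Matrix (Fin s) (Fin h) F)
    (C : Fin s → Submodule F (Fin m → F))
    {x : Fin h × Fin m → F}
    (hx : x ∈ dualE (mpcSet (fun i => (C i : Set (Fin m → F))) A))
    (i0 : Fin s) :
    (fun l => ∑ k, A i0 k * x (k, l)) ∈ dualE ((C i0 : Set (Fin m → F))) := by
  intro c hc
  classical
  set v : Fin s → Fin m → F := fun i => if i = i0 then c else 0 with hv
  set p : Fin h × Fin m → F := fun q => A i0 q.1 * c q.2 with hp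
  have hpmem : p ∈ mpcSet (fun i => (C i : Set (Fin m → F))) A := by
    refine ⟨v, ?_, ?_⟩
    · intro i
      by_cases hii : i = i0
      · subst hii; simpa [hv] using hc
      · simp [hv, hii, Submodule.zero_mem]
    · intro q
      simp [hp, hv, ite_apply, mul_ite, Finset.sum_ite_eq']
  have h2 : ∑ q : Fin h × Fin m, x q * p q = 0 := hx p hpmem
  rw [Fintype.sum_prod_type] at h2
  calc ∑ l, (∑ k, A i0 k * x (k, l)) * c l
      = ∑ l, ∑ k, x (k, l) * p (k, l) := by
        refine Finset.sum_congr rfl fun l _ => ?_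
        rw [Finset.sum_mul]
        refine Finset.sum_congr rfl fun k _ => ?_
        simp [hp]; ring
    _ = ∑ k, ∑ l, x (k, l) * p (k, l) := Finset.sum_comm
    _ = 0 := h2

lemma main_bound {F : Type*} [Field F] [DecidableEq F] {s h m : ℕ}
    {A : Matrix (Fin s) (Fin h) F} (hA : IsNSC A)
    (C : Fin s → Submodule F (Fin m → F))
    {x : Fin h × Fin m → F}
    (hx : x ∈ dualE (mpcSet (fun i => (C i : Set (Fin m → F))) A)) (hx0 : x ≠ 0) :
    s + 1 ≤ hammingNorm x ∨
      ∃ i : Fin s, ((i : ℕ) + 1) * dminS (dualE ((C i : Set (Fin m → F)))) ≤ hammingNorm x := by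
  classical
  set y : Fin s → Fin m → F := fun i l => ∑ k, A i k * x (k, l) with hy
  by_cases hall : ∀ i, y i = 0
  · left
    obtain ⟨q, hq⟩ := Function.ne_iff.mp hx0
    set u : Fin h → F := fun k => x (k, q.2) with hu
    have hune : u ≠ 0 := by
      intro h0
      exact hq (by simpa [hu] using congrFun h0 q.1)
    have hcol : s + 1 ≤ hammingNorm u := by
      by_contra hle
      push_neg at hle
      exact hune (nsc_kernel hA le_rfl (Nat.lt_succ_iff.mp hle)
        (fun i _ => congrFun (hall i) q.2))
    calc s + 1 ≤ hammingNorm u := hcol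
      _ ≤ hammingNorm x := by
        rw [hn_col x]
        exact Finset.single_le_sum (f := fun l => hammingNorm fun k => x (k, l))
          (fun _ _ => Nat.zero_le _) (Finset.mem_univ q.2)
  · right
    push_neg at hall
    set T : Finset (Fin s) := Finset.univ.filter (fun i => y i ≠ 0) with hT
    have hTne : T.Nonempty := by
      obtain ⟨i, hi⟩ := hall
      exact ⟨i, by simp [hT, hi]⟩
    set j := T.min' hTne with hj
    have hjy : y j ≠ 0 := (Finset.mem_filter.mp (T.min'_mem hTne)).2
    have hlt : ∀ i : Fin s, (i : ℕ) < (j : ℕ) → y i = 0 := by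
      intro i hi
      by_contra hne
      have hji : j ≤ i := T.min'_le i (by simp [hT, hne])
      exact absurd (Fin.lt_def.mpr hi) (not_lt.mpr hji)
    refine ⟨j, ?_⟩
    have hdm : dminS (dualE ((C j : Set (Fin m → F)))) ≤ hammingNorm (y j) :=
      Nat.sInf_le ⟨y j, y_mem A C hx j, hjy, rfl⟩
    have hcol : ∀ l : Fin m, y j l ≠ 0 →
        (j : ℕ) + 1 ≤ hammingNorm (fun k => x (k, l)) := by
      intro l hl
      by_contra hle
      push_neg at hle
      have hz := nsc_kernel hA (le_of_lt j.2) (Nat.lt_succ_iff.mp hle)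
        (fun i hi => congrFun (hlt i hi) l)
      apply hl
      have hzk : ∀ k, x (k, l) = 0 := fun k => congrFun hz k
      simp [hy, hzk]
    calc ((j : ℕ) + 1) * dminS (dualE ((C j : Set (Fin m → F))))
        ≤ ((j : ℕ) + 1) * hammingNorm (y j) := Nat.mul_le_mul_left _ hdm
      _ = ∑ l ∈ Finset.univ.filter (fun l => y j l ≠ 0), ((j : ℕ) + 1) := by
          rw [Finset.sum_const, smul_eq_mul, mul_comm]
          rfl
      _ ≤ ∑ l ∈ Finset.univ.filter (fun l => y j l ≠ 0),
            hammingNorm (fun k => x (k, l)) := by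
          refine Finset.sum_le_sum fun l hl => ?_
          rw [Finset.mem_filter] at hl
          exact hcol l hl.2
      _ ≤ ∑ l : Fin m, hammingNorm (fun k => x (k, l)) :=
          Finset.sum_le_sum_of_subset (Finset.filter_subset _ _)
      _ = hammingNorm x := (hn_col x).symm

lemma dual_nonzero {F : Type*} [Field F] [DecidableEq F] {s h m : ℕ}
    (hs : 0 < s) (hsh : s ≤ h)
    {A : Matrix (Fin s) (Fin h) F} (hA : IsNSC A)
    (C : Fin s → Submodule F (Fin m → F)) (hprop : ∀ i, C i ≠ ⊤) :
    ∃ x : Fin h × Fin m → F, x ≠ 0 ∧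
      x ∈ dualE (mpcSet (fun i => (C i : Set (Fin m → F))) A) := by
  classical
  set i0 : Fin s := ⟨0, hs⟩ with hi0
  obtain ⟨z, hz0, hz⟩ := exists_dual_vec (C i0) (hprop i0)
  set M : Matrix (Fin s) (Fin s) F := Matrix.of (fun r t => A r (Fin.castLE hsh t)) with hM
  have hdet : M.det ≠ 0 := by
    have := hA s le_rfl hs (Fin.castLE hsh) (Fin.strictMono_castLE hsh)
    convert this using 2
    ext r t; simp [hM]
  set w : Fin s → F := M⁻¹.mulVec (Pi.single i0 1) with hw
  have hMw : M.mulVec w = Pi.single i0 1 := by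
    rw [hw, Matrix.mulVec_mulVec, Matrix.mul_nonsing_inv _ (isUnit_iff_ne_zero.mpr hdet),
      Matrix.one_mulVec]
  set g : Fin h → F := fun k => if hk : (k : ℕ) < s then w ⟨k, hk⟩ else 0 with hg
  have hgcast : ∀ t : Fin s, g (Fin.castLE hsh t) = w t := by
    intro t
    have h1 : ((Fin.castLE hsh t : Fin h) : ℕ) < s := t.2
    simp only [hg, dif_pos h1]
    congr 1
  have hAg : ∀ i : Fin s, ∑ k, A i k * g k = (Pi.single i0 (1 : F) : Fin s → F) i := by
    intro i
    have hstep : ∑ k, A i k * g k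
        = ∑ k ∈ Finset.univ.map (Fin.castLEEmb hsh), A i k * g k := by
      symm
      apply Finset.sum_subset (Finset.subset_univ _)
      intro k _ hk
      have hks : ¬ (k : ℕ) < s := by
        intro hlt
        exact hk (Finset.mem_map.mpr ⟨⟨(k : ℕ), hlt⟩, Finset.mem_univ _, by
          simp [Fin.castLEEmb]⟩)
      simp [hg, hks]
    rw [hstep, Finset.sum_map]
    have : ∀ t : Fin s, A i (Fin.castLEEmb hsh t) * g (Fin.castLEEmb hsh t)
        = M i t * w t := by
      intro t
      have := hgcast t
      simp only [Fin.coe_castLEEmb] at *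
      rw [this]
      rfl
    rw [Finset.sum_congr rfl (fun t _ => this t)]
    have := congrFun hMw i
    simpa [Matrix.mulVec, dotProduct] using this
  have hwne : w ≠ 0 := by
    intro h0
    have h1 := congrFun hMw i0
    rw [h0] at h1
    simp [Matrix.mulVec_zero] at h1
  obtain ⟨t0, ht0⟩ := Function.ne_iff.mp hwne
  obtain ⟨l0, hl0⟩ := Function.ne_iff.mp hz0
  refine ⟨fun q => g q.1 * z q.2, ?_, ?_⟩
  · intro h0
    have := congrFun h0 (Fin.castLE hsh t0, l0)
    simp only [Pi.zero_apply] at this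
    rw [hgcast t0] at this
    exact (mul_ne_zero ht0 hl0) this
  · intro p hp
    obtain ⟨v, hvmem, hpv⟩ := hp
    calc ∑ q : Fin h × Fin m, g q.1 * z q.2 * p q
        = ∑ k, ∑ l, ∑ i, g k * z l * (A i k * v i l) := by
          rw [Fintype.sum_prod_type]
          refine Finset.sum_congr rfl fun k _ => Finset.sum_congr rfl fun l _ => ?_
          rw [hpv (k, l), Finset.mul_sum]
      _ = ∑ k, ∑ i, ∑ l, g k * z l * (A i k * v i l) :=
          Finset.sum_congr rfl fun k _ => Finset.sum_comm
      _ = ∑ i, ∑ k, ∑ l, g k * z l * (A i k * v i l) := Finset.sum_comm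
      _ = ∑ i, ∑ l, ∑ k, g k * z l * (A i k * v i l) :=
          Finset.sum_congr rfl fun i _ => Finset.sum_comm
      _ = ∑ i, ∑ l, (∑ k, A i k * g k) * (z l * v i l) := by
          refine Finset.sum_congr rfl fun i _ => Finset.sum_congr rfl fun l _ => ?_
          rw [Finset.sum_mul]
          refine Finset.sum_congr rfl fun k _ => by ring
      _ = ∑ i, ∑ l, (Pi.single i0 (1 : F) : Fin s → F) i * (z l * v i l) := by
          refine Finset.sum_congr rfl fun i _ => Finset.sum_congr rfl fun l _ => ?_
          rw [hAg i]
      _ = ∑ l, z l * v i0 l := by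
          simp [Pi.single_apply, ite_mul, Finset.sum_ite_eq']
      _ = 0 := hz (v i0) (hvmem i0)

/-- lower bound for the minimum distance of the Euclidean dual of a
matrix-product code with NSC matrix `A`. -/
theorem stmt15 {F : Type*} [Field F] [Fintype F] [DecidableEq F] {s h m : ℕ}
    (hs : 0 < s) (hsh : s ≤ h)
    (A : Matrix (Fin s) (Fin h) F) (hA : IsNSC A)
    (C : Fin s → Submodule F (Fin m → F))
    (hnz : ∀ i, C i ≠ ⊥) (hprop : ∀ i, C i ≠ ⊤) :
    sInf ({s + 1} ∪
        { v | ∃ i : Fin s, v = ((i : ℕ) + 1) * dminS (dualE ((C i : Set (Fin m → F)))) })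
      ≤ dminS (dualE (mpcSet (fun i => (C i : Set (Fin m → F))) A)) := by
  classical
  obtain ⟨x0, hx0ne, hx0mem⟩ := dual_nonzero hs hsh hA C hprop
  set D := dualE (mpcSet (fun i => (C i : Set (Fin m → F))) A) with hD
  set W : Set ℕ := { w | ∃ c ∈ D, c ≠ 0 ∧ hammingNorm c = w } with hW
  have hWne : W.Nonempty := ⟨hammingNorm x0, x0, hx0mem, hx0ne, rfl⟩
  have hd : dminS D = sInf W := rfl
  have hmem : dminS D ∈ W := by rw [hd]; exact Nat.sInf_mem hWne
  obtain ⟨c, hcmem, hcne, hcw⟩ := hmem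
  rcases main_bound hA C hcmem hcne with hb | ⟨i, hb⟩
  · exact le_trans (Nat.sInf_le (Set.mem_union_left _ rfl)) (hcw ▸ hb)
  · exact le_trans (Nat.sInf_le (Set.mem_union_right _ ⟨i, rfl⟩)) (hcw ▸ hb)
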